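/- Let f : [a,b] → ℝ be positive, integrable, and convex on [a,b] with 0 ≤ a < b, and let α > 0. Then f((a+b)/2) ≤ (Γ(α+1)/(2(b-a)^α)) [J^α_{a+}f(b) + J^α_{b-}f(a)] ≤ (f(a)+f(b))/2. -/

import Mathlib

open MeasureTheory intervalIntegral Real

theorem hh_riemann_liouville (a b α : ℝ) (ha : 0 ≤ a) (hab : a < b) (hα : 0 < α)
    (f : ℝ → ℝ)
    (hpos : ∀ x ∈ Set.Icc a b, 0 < f x)
    (hint : IntervalIntegrable f volume a b)
    (hconv : ConvexOn ℝ (Set.Icc a b) f) :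
    f ((a + b) / 2) ≤
      (Real.Gamma (α + 1) / (2 * (b - a) ^ α)) *
        ((1 / Real.Gamma α) * (∫ t in a..b, (b - t) ^ (α - 1) * f t) +
         (1 / Real.Gamma α) * (∫ t in a..b, (t - a) ^ (α - 1) * f t)) ∧
    (Real.Gamma (α + 1) / (2 * (b - a) ^ α)) *
        ((1 / Real.Gamma α) * (∫ t in a..b, (b - t) ^ (α - 1) * f t) +
         (1 / Real.Gamma α) * (∫ t in a..b, (t - a) ^ (α - 1) * f t)) ≤
      (f a + f b) / 2 := by
  have hb : a ≤ b := hab.le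
  have hba : 0 < b - a := sub_pos.2 hab
  have hα1 : (-1:ℝ) < α - 1 := by linarith
  set C := max (f a) (f b) with hC
  have hC0 : 0 < C := lt_of_lt_of_le (hpos a ⟨le_refl a, hb⟩) (le_max_left _ _)
  -- chord interpolation
  have hinterp : ∀ t ∈ Set.Icc a b,
      f t ≤ (b - t)/(b-a) * f a + (t-a)/(b-a) * f b := by
    intro t ht
    obtain ⟨ht1, ht2⟩ := ht
    have hl1 : (0:ℝ) ≤ (b - t) / (b - a) := div_nonneg (by linarith) hba.le
    have hm1 : (0:ℝ) ≤ (t - a) / (b - a) := div_nonneg (by linarith) hba.le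
    have hsum : (b - t)/(b-a) + (t-a)/(b-a) = 1 := by field_simp; ring
    have h := hconv.2 (Set.left_mem_Icc.2 hb) (Set.right_mem_Icc.2 hb) hl1 hm1 hsum
    simp only [smul_eq_mul] at h
    have hrep : (b - t)/(b-a) * a + (t-a)/(b-a) * b = t := by
      field_simp; ring
    rwa [hrep] at h
  have hfle : ∀ t ∈ Set.Icc a b, f t ≤ C := by
    intro t ht
    have h := hinterp t ht
    obtain ⟨ht1, ht2⟩ := ht
    have hsum : (b - t)/(b-a) + (t-a)/(b-a) = 1 := by field_simp; ring
    nlinarith [le_max_left (f a) (f b), le_max_right (f a) (f b),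
      div_nonneg (by linarith : (0:ℝ) ≤ b - t) hba.le,
      div_nonneg (by linarith : (0:ℝ) ≤ t - a) hba.le]
  have hσmem : ∀ t ∈ Set.Icc a b, a + b - t ∈ Set.Icc a b := by
    intro t ht; exact ⟨by linarith [ht.2], by linarith [ht.1]⟩
  -- chord sum bound
  have hchord : ∀ t ∈ Set.Icc a b, f (a + b - t) + f t ≤ f a + f b := by
    intro t ht
    have h1 := hinterp t ht
    have h2 := hinterp (a + b - t) (hσmem t ht)
    rw [show b - (a + b - t) = t - a by ring, show a + b - t - a = b - t by ring] at h2
    have hkey : (b - t)/(b-a) * f a + (t-a)/(b-a) * f b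
        + ((t - a)/(b-a) * f a + (b - t)/(b-a) * f b) = f a + f b := by
      field_simp; ring
    linarith
  -- midpoint bound
  have hmid : ∀ t ∈ Set.Icc a b, 2 * f ((a+b)/2) ≤ f (a + b - t) + f t := by
    intro t ht
    have h := hconv.2 ht (hσmem t ht) (by norm_num : (0:ℝ) ≤ 1/2)
      (by norm_num : (0:ℝ) ≤ 1/2) (by norm_num)
    simp only [smul_eq_mul] at h
    rw [show (1/2 : ℝ) * t + 1/2 * (a + b - t) = (a+b)/2 by ring] at h
    linarith
  -- integrability of weight
  have hw_int : IntervalIntegrable (fun t => (t - a) ^ (α - 1)) volume a b := by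
    have h := (intervalIntegrable_rpow' (a := 0) (b := b - a) hα1).comp_sub_right a
    simpa using h
  have hw_meas : Measurable (fun t : ℝ => (t - a) ^ (α - 1)) := by fun_prop
  -- AESM of f and f ∘ σ on Ι a b
  have hf_aesm : AEStronglyMeasurable f (volume.restrict (Set.uIoc a b)) :=
    (intervalIntegrable_iff.mp hint).aestronglyMeasurable
  have hfσ_int : IntervalIntegrable (fun t => f (a + b - t)) volume a b := by
    have h := hint.comp_sub_left (a + b)
    rw [show a + b - a = b by ring, show a + b - b = a by ring] at h
    exact h.symm
  have hfσ_aesm : AEStronglyMeasurable (fun t => f (a + b - t)) (volume.restrict (Set.uIoc a b)) :=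
    (intervalIntegrable_iff.mp hfσ_int).aestronglyMeasurable
  -- product integrability
  have hprod : ∀ g : ℝ → ℝ, AEStronglyMeasurable g (volume.restrict (Set.uIoc a b)) →
      (∀ t ∈ Set.Icc a b, 0 ≤ g t ∧ g t ≤ C) →
      IntervalIntegrable (fun t => (t - a) ^ (α - 1) * g t) volume a b := by
    intro g hg hgb
    refine (hw_int.mul_const C).mono_fun
      ((hw_meas.aestronglyMeasurable.restrict).mul hg) ?_
    filter_upwards [ae_restrict_mem measurableSet_uIoc] with t ht
    rw [Set.uIoc_of_le hb] at ht
    have htI : t ∈ Set.Icc a b := Set.Ioc_subset_Icc_self ht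
    have hw0 : 0 ≤ (t - a) ^ (α - 1) := Real.rpow_nonneg (by linarith [htI.1]) _
    obtain ⟨hg0, hgC⟩ := hgb t htI
    rw [Real.norm_eq_abs, Real.norm_eq_abs, abs_of_nonneg (mul_nonneg hw0 hg0),
      abs_of_nonneg (mul_nonneg hw0 hC0.le)]
    exact mul_le_mul_of_nonneg_left hgC hw0
  have hint2 : IntervalIntegrable (fun t => (t - a) ^ (α - 1) * f t) volume a b :=
    hprod f hf_aesm (fun t ht => ⟨(hpos t ht).le, hfle t ht⟩)
  have hintσ : IntervalIntegrable (fun t => (t - a) ^ (α - 1) * f (a + b - t)) volume a b :=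
    hprod (fun t => f (a + b - t)) hfσ_aesm
      (fun t ht => ⟨(hpos _ (hσmem t ht)).le, hfle _ (hσmem t ht)⟩)
  have hint_sum : IntervalIntegrable (fun t => (t - a) ^ (α - 1) * (f (a + b - t) + f t))
      volume a b := by
    have h := hintσ.add hint2
    have he : (fun t => (t - a) ^ (α - 1) * (f (a + b - t) + f t))
        = fun t => (t - a) ^ (α - 1) * f (a + b - t) + (t - a) ^ (α - 1) * f t := by
      funext t; ring
    rwa [he]
  -- reflection identity
  have hI1 : (∫ t in a..b, (b - t) ^ (α - 1) * f t)
      = ∫ t in a..b, (t - a) ^ (α - 1) * f (a + b - t) := by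
    have h := integral_comp_sub_left (a := a) (b := b) (fun t => (b - t) ^ (α - 1) * f t) (a + b)
    rw [show a + b - b = a by ring, show a + b - a = b by ring] at h
    rw [← h]
    apply intervalIntegral.integral_congr
    intro t _
    show (b - (a + b - t)) ^ (α - 1) * f (a + b - t) = (t - a) ^ (α - 1) * f (a + b - t)
    rw [show b - (a + b - t) = t - a by ring]
  -- weight integral
  have hK : (∫ t in a..b, (t - a) ^ (α - 1)) = (b - a) ^ α / α := by
    rw [integral_comp_sub_right (fun x => x ^ (α - 1)) a, sub_self,
      integral_rpow (Or.inl hα1), sub_add_cancel,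
      Real.zero_rpow hα.ne', sub_zero]
  set S := ∫ t in a..b, (t - a) ^ (α - 1) * (f (a + b - t) + f t) with hSdef
  have hS : (∫ t in a..b, (b - t) ^ (α - 1) * f t) + (∫ t in a..b, (t - a) ^ (α - 1) * f t)
      = S := by
    rw [hI1, ← intervalIntegral.integral_add hintσ hint2]
    apply intervalIntegral.integral_congr
    intro t _; ring
  set P := (b - a) ^ α with hPdef
  have hP : 0 < P := Real.rpow_pos_of_pos hba α
  -- lower bound on S
  have hlowS : 2 * f ((a+b)/2) * (P / α) ≤ S := by
    calc 2 * f ((a+b)/2) * (P / α)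
        = ∫ t in a..b, (t - a) ^ (α - 1) * (2 * f ((a+b)/2)) := by
          rw [intervalIntegral.integral_mul_const, hK]; ring
      _ ≤ S := by
          apply intervalIntegral.integral_mono_on hb (hw_int.mul_const _) hint_sum
          intro t ht
          exact mul_le_mul_of_nonneg_left (hmid t ht)
            (Real.rpow_nonneg (by linarith [ht.1]) _)
  -- upper bound on S
  have huppS : S ≤ (f a + f b) * (P / α) := by
    calc S ≤ ∫ t in a..b, (t - a) ^ (α - 1) * (f a + f b) := by
          apply intervalIntegral.integral_mono_on hb hint_sum (hw_int.mul_const _)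
          intro t ht
          exact mul_le_mul_of_nonneg_left (hchord t ht)
            (Real.rpow_nonneg (by linarith [ht.1]) _)
      _ = (f a + f b) * (P / α) := by rw [intervalIntegral.integral_mul_const, hK]; ring
  -- rewrite the expression
  have hΓ : Real.Gamma α ≠ 0 := (Real.Gamma_pos_of_pos hα).ne'
  have hE : (Real.Gamma (α + 1) / (2 * (b - a) ^ α)) *
        ((1 / Real.Gamma α) * (∫ t in a..b, (b - t) ^ (α - 1) * f t) +
         (1 / Real.Gamma α) * (∫ t in a..b, (t - a) ^ (α - 1) * f t))
      = α / (2 * P) * S := by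
    rw [Real.Gamma_add_one hα.ne', ← hS, ← hPdef]
    field_simp
  rw [hE]
  have hcoef : (0:ℝ) < α / (2 * P) := by positivity
  constructor
  · calc f ((a+b)/2) = α / (2 * P) * (2 * f ((a+b)/2) * (P / α)) := by
          field_simp
      _ ≤ α / (2 * P) * S := mul_le_mul_of_nonneg_left hlowS hcoef.le
  · calc α / (2 * P) * S ≤ α / (2 * P) * ((f a + f b) * (P / α)) :=
          mul_le_mul_of_nonneg_left huppS hcoef.le
      _ = (f a + f b) / 2 := by field_simp
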